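/- Let f_A, f_B be probability densities on ℝ with equal means and finite first moments, λ > 1, 0 < η < 1, and let m_A, m_B satisfy ∫_{−∞}^{m_A} f_A = ∫_{−∞}^{m_B} f_B = (1−η)/(η(λ−1)). Then the sophisticated agent's utility from lottery A exceeds that from B, i.e. m_A + ηE_{f_A}μ(Z − m_A) > m_B + ηE_{f_B}μ(Z − m_B), if and only if ∫_{−∞}^{m_A} f_A(Z) Z dZ > ∫_{−∞}^{m_B} f_B(Z) Z dZ. -/

import Mathlib

open MeasureTheory Set

/-- Piecewise-linear loss-averse gain-loss utility. -/
noncomputable def mu (lam x : ℝ) : ℝ := if 0 ≤ x then x else lam * x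

lemma key_identity (f : ℝ → ℝ) (lam eta m : ℝ) (hlam : 1 < lam) (heta0 : 0 < eta)
    (hf_int : Integrable f) (hf_total : ∫ z, f z = 1)
    (hfz_int : Integrable (fun z => f z * z))
    (hloss : ∫ z in Iio m, f z = (1 - eta) / (eta * (lam - 1))) :
    m + eta * (∫ z, f z * mu lam (z - m)) =
      eta * (∫ z, f z * z) + eta * (lam - 1) * ∫ z in Iio m, f z * z := by
  have hg1 : Integrable (fun z => f z * (z - m)) := by
    have : (fun z => f z * (z - m)) = fun z => f z * z - f z * m := by
      funext z; ring
    rw [this]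
    exact hfz_int.sub (hf_int.mul_const m)
  have hpt : ∀ z, f z * mu lam (z - m) =
      f z * (z - m) + (lam - 1) * (Iio m).indicator (fun z => f z * (z - m)) z := by
    intro z
    unfold mu
    by_cases h : 0 ≤ z - m
    · have hz : z ∉ Iio m := by simp [Set.mem_Iio]; linarith
      simp [h, indicator_of_notMem hz]
    · have hz : z ∈ Iio m := by simp [Set.mem_Iio]; linarith
      simp only [if_neg h, indicator_of_mem hz]
      ring
  have hind : Integrable ((Iio m).indicator (fun z => f z * (z - m))) :=
    hg1.indicator measurableSet_Iio
  have hsplit : ∫ z, f z * mu lam (z - m) =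
      (∫ z, f z * (z - m)) + (lam - 1) * ∫ z in Iio m, f z * (z - m) := by
    calc ∫ z, f z * mu lam (z - m)
        = ∫ z, (f z * (z - m) + (lam - 1) * (Iio m).indicator (fun z => f z * (z - m)) z) := by
          congr 1; funext z; exact hpt z
      _ = (∫ z, f z * (z - m)) + ∫ z, (lam - 1) * (Iio m).indicator (fun z => f z * (z - m)) z := by
          exact integral_add hg1 (hind.const_mul _)
      _ = (∫ z, f z * (z - m)) + (lam - 1) * ∫ z in Iio m, f z * (z - m) := by
          rw [integral_const_mul, integral_indicator measurableSet_Iio]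
  have h1 : ∫ z, f z * (z - m) = (∫ z, f z * z) - m := by
    have : (fun z => f z * (z - m)) = fun z => f z * z - f z * m := by
      funext z; ring
    rw [this, integral_sub hfz_int (hf_int.mul_const m), integral_mul_const, hf_total]
    ring
  have h2 : ∫ z in Iio m, f z * (z - m) =
      (∫ z in Iio m, f z * z) - m * ((1 - eta) / (eta * (lam - 1))) := by
    have heq : (fun z => f z * (z - m)) = fun z => f z * z - f z * m := by
      funext z; ring
    rw [heq, integral_sub (hfz_int.integrableOn) ((hf_int.mul_const m).integrableOn),
      integral_mul_const, hloss]
    ring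
  rw [hsplit, h1, h2]
  have hne1 : eta ≠ 0 := ne_of_gt heta0
  have hne2 : lam - 1 ≠ 0 := by linarith
  field_simp
  ring

/-- For two equal-mean lotteries evaluated by a sophisticated agent at
optimal anticipations (loss probability (1−η)/(η(λ−1))), A is strictly
preferred to B iff ∫_{−∞}^{m_A} f_A(Z)Z dZ > ∫_{−∞}^{m_B} f_B(Z)Z dZ. -/
theorem stmt_10 (fA fB : ℝ → ℝ) (lam eta mA mB : ℝ) (hlam : 1 < lam)
    (heta0 : 0 < eta) (heta1 : eta < 1)
    (hfA_nonneg : ∀ z, 0 ≤ fA z) (hfB_nonneg : ∀ z, 0 ≤ fB z)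
    (hfA_int : Integrable fA) (hfB_int : Integrable fB)
    (hfA_total : ∫ z, fA z = 1) (hfB_total : ∫ z, fB z = 1)
    (hfAz_int : Integrable (fun z => fA z * z))
    (hfBz_int : Integrable (fun z => fB z * z))
    (hmean : ∫ z, fA z * z = ∫ z, fB z * z)
    (hmuA_int : Integrable (fun z => fA z * mu lam (z - mA)))
    (hmuB_int : Integrable (fun z => fB z * mu lam (z - mB)))
    (hlossA : ∫ z in Iio mA, fA z = (1 - eta) / (eta * (lam - 1)))
    (hlossB : ∫ z in Iio mB, fB z = (1 - eta) / (eta * (lam - 1))) :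
    mB + eta * (∫ z, fB z * mu lam (z - mB)) <
        mA + eta * (∫ z, fA z * mu lam (z - mA)) ↔
      (∫ z in Iio mB, fB z * z) < ∫ z in Iio mA, fA z * z := by
  rw [key_identity fA lam eta mA hlam heta0 hfA_int hfA_total hfAz_int hlossA,
      key_identity fB lam eta mB hlam heta0 hfB_int hfB_total hfBz_int hlossB,
      hmean]
  have hpos : 0 < eta * (lam - 1) := mul_pos heta0 (by linarith)
  constructor
  · intro h
    have := lt_of_add_lt_add_left h
    exact (mul_lt_mul_iff_right₀ hpos).mp this
  · intro h
    exact add_lt_add_right ((mul_lt_mul_iff_right₀ hpos).mpr h) _
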